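/- Let f, g be real analytic functions near 0 ∈ ℝ² that are monic polynomials in y over convergent real power series in x, with g having an isolated zero at the origin. Let h be the (monic, after a suitable linear change of coordinates) polynomial y(g f_x − f g_x) − x(g f_y − f g_y), and let σ₁(t), …, σ_l(t) be the real-coefficient Puiseux parametrizations with σ_i(0) = 0 arising from the factorization h(t^N, y) = ∏_j (y − σ_j(t)) (i.e., those σ_j that are real series vanishing at 0). Then lim_{(x,y)→(0,0)} f(x,y)/g(x,y) exists if and only if for each i = 1, …, l the one-variable limit L_i = lim_{t→0} f(t^N, σ_i(t))/g(t^N, σ_i(t)) exists and L₁ = ⋯ = L_l. -/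

import Mathlib

open Filter Real Set

noncomputable def rad (p : ℝ × ℝ) : ℝ := Real.sqrt (p.1 ^ 2 + p.2 ^ 2)

lemma rad_nonneg (p : ℝ × ℝ) : 0 ≤ rad p := Real.sqrt_nonneg _

lemma rad_eq_zero {p : ℝ × ℝ} (h : rad p = 0) : p = 0 := by
  have := (Real.sqrt_eq_zero (by positivity)).1 h
  have h1 : p.1 = 0 := by nlinarith [sq_nonneg p.1, sq_nonneg p.2]
  have h2 : p.2 = 0 := by nlinarith [sq_nonneg p.1, sq_nonneg p.2]
  exact Prod.ext h1 h2

lemma rad_gamma (r θ : ℝ) (hr : 0 ≤ r) :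
    rad (r * Real.cos θ, r * Real.sin θ) = r := by
  have : (r * Real.cos θ) ^ 2 + (r * Real.sin θ) ^ 2 = r ^ 2 := by
    have := Real.sin_sq_add_cos_sq θ; nlinarith
  rw [rad, this, Real.sqrt_sq hr]

lemma exists_polar {p : ℝ × ℝ} (hp : p ≠ 0) :
    ∃ θ : ℝ, p = (rad p * Real.cos θ, rad p * Real.sin θ) := by
  set z : ℂ := ⟨p.1, p.2⟩ with hz
  have hz0 : z ≠ 0 := by
    intro h
    apply hp
    have h1 : z.re = 0 := by rw [h]; simp
    have h2 : z.im = 0 := by rw [h]; simp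
    exact Prod.ext h1 h2
  have habs : ‖z‖ = rad p := by
    rw [Complex.norm_def, Complex.normSq_mk, rad]; ring_nf
  refine ⟨Complex.arg z, ?_⟩
  have h1 := Complex.norm_mul_cos_arg z
  have h2 := Complex.norm_mul_sin_arg z
  rw [habs] at h1 h2
  exact Prod.ext h1.symm h2.symm

lemma abs_fst_le_rad (p : ℝ × ℝ) : |p.1| ≤ rad p := by
  rw [rad, ← Real.sqrt_sq_eq_abs]
  exact Real.sqrt_le_sqrt (by nlinarith [sq_nonneg p.2])

lemma abs_snd_le_rad (p : ℝ × ℝ) : |p.2| ≤ rad p := by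
  rw [rad, ← Real.sqrt_sq_eq_abs]
  exact Real.sqrt_le_sqrt (by nlinarith [sq_nonneg p.1])

lemma rad_le (p : ℝ × ℝ) : rad p ≤ |p.1| + |p.2| := by
  rw [rad]
  have h : p.1 ^ 2 + p.2 ^ 2 ≤ (|p.1| + |p.2|) ^ 2 := by
    nlinarith [abs_nonneg p.1, abs_nonneg p.2, sq_abs p.1, sq_abs p.2,
      mul_nonneg (abs_nonneg p.1) (abs_nonneg p.2)]
  calc Real.sqrt (p.1 ^ 2 + p.2 ^ 2) ≤ Real.sqrt ((|p.1| + |p.2|) ^ 2) :=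
        Real.sqrt_le_sqrt h
    _ = |p.1| + |p.2| := Real.sqrt_sq (by positivity)

lemma circle_max (f g : ℝ × ℝ → ℝ) (U : Set (ℝ × ℝ))
    (hf : AnalyticOnNhd ℝ f U) (hg : AnalyticOnNhd ℝ g U)
    (hiso : ∀ p ∈ U, p ≠ 0 → g p ≠ 0) (r : ℝ) (hr : 0 < r)
    (hball : ∀ p : ℝ × ℝ, rad p = r → p ∈ U) :
    ∃ p : ℝ × ℝ, rad p = r ∧ (∀ q : ℝ × ℝ, rad q = r → f q / g q ≤ f p / g p) ∧
      p.2 * (g p * fderiv ℝ f p (1, 0) - f p * fderiv ℝ g p (1, 0)) -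
      p.1 * (g p * fderiv ℝ f p (0, 1) - f p * fderiv ℝ g p (0, 1)) = 0 := by
  set γ : ℝ → ℝ × ℝ := fun θ => (r * Real.cos θ, r * Real.sin θ) with hγdef
  have hradγ : ∀ θ, rad (γ θ) = r := fun θ => rad_gamma r θ hr.le
  have hγU : ∀ θ, γ θ ∈ U := fun θ => hball _ (hradγ θ)
  have hγ0 : ∀ θ, γ θ ≠ 0 := by
    intro θ h
    have : rad (γ θ) = 0 := by rw [h]; simp [rad]
    rw [hradγ θ] at this; exact hr.ne' this
  have hgne : ∀ θ, g (γ θ) ≠ 0 := fun θ => hiso _ (hγU θ) (hγ0 θ)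
  set φ : ℝ → ℝ := fun θ => f (γ θ) / g (γ θ) with hφdef
  set D : ℝ → ℝ := fun θ =>
    (fderiv ℝ f (γ θ) (r * -Real.sin θ, r * Real.cos θ) * g (γ θ) -
      f (γ θ) * fderiv ℝ g (γ θ) (r * -Real.sin θ, r * Real.cos θ)) / g (γ θ) ^ 2 with hDdef
  have hγd : ∀ θ, HasDerivAt γ (r * -Real.sin θ, r * Real.cos θ) θ := by
    intro θ
    exact ((Real.hasDerivAt_cos θ).const_mul r).prodMk ((Real.hasDerivAt_sin θ).const_mul r)
  have hφd : ∀ θ, HasDerivAt φ (D θ) θ := by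
    intro θ
    have hFf : HasFDerivAt f (fderiv ℝ f (γ θ)) (γ θ) :=
      ((hf _ (hγU θ)).differentiableAt).hasFDerivAt
    have hFg : HasFDerivAt g (fderiv ℝ g (γ θ)) (γ θ) :=
      ((hg _ (hγU θ)).differentiableAt).hasFDerivAt
    have ha : HasDerivAt (fun θ => f (γ θ))
        (fderiv ℝ f (γ θ) (r * -Real.sin θ, r * Real.cos θ)) θ :=
      hFf.comp_hasDerivAt θ (hγd θ)
    have hb : HasDerivAt (fun θ => g (γ θ))
        (fderiv ℝ g (γ θ) (r * -Real.sin θ, r * Real.cos θ)) θ :=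
      hFg.comp_hasDerivAt θ (hγd θ)
    exact ha.div hb (hgne θ)
  have hper : Function.Periodic φ (2 * Real.pi) := by
    intro θ
    simp only [hφdef, hγdef, Real.cos_add_two_pi, Real.sin_add_two_pi]
  obtain ⟨θ₀, hθ₀mem, hmax⟩ := isCompact_Icc.exists_isMaxOn
    (⟨0, by constructor <;> positivity⟩ : (Set.Icc (0:ℝ) (2 * Real.pi)).Nonempty)
    (fun θ _ => ((hφd θ).continuousAt).continuousWithinAt)
  have hglob : ∀ x, φ x ≤ φ θ₀ := by
    intro x
    obtain ⟨y, hy, hxy⟩ := hper.exists_mem_Ico₀ (by positivity) x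
    rw [hxy]
    exact hmax ⟨hy.1, hy.2.le⟩
  have hloc : IsLocalMax φ θ₀ := by
    have : IsMaxOn φ Set.univ θ₀ := fun x _ => hglob x
    exact this.isLocalMax univ_mem
  have hD0 : D θ₀ = 0 := by
    rw [← (hφd θ₀).deriv]; exact hloc.deriv_eq_zero
  refine ⟨γ θ₀, hradγ θ₀, ?_, ?_⟩
  · intro q hq
    have hq0 : q ≠ 0 := fun h => hr.ne' (by rw [h] at hq; rw [← hq]; simp [rad])
    obtain ⟨θ, hθ⟩ := exists_polar hq0
    rw [hq] at hθ
    have : f q / g q = φ θ := by rw [hθ]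
    rw [this]; exact hglob θ
  · have hg2 : g (γ θ₀) ^ 2 ≠ 0 := pow_ne_zero _ (hgne θ₀)
    have hnum : fderiv ℝ f (γ θ₀) (r * -Real.sin θ₀, r * Real.cos θ₀) * g (γ θ₀) -
        f (γ θ₀) * fderiv ℝ g (γ θ₀) (r * -Real.sin θ₀, r * Real.cos θ₀) = 0 := by
      have h := hD0
      simp only [hDdef] at h
      rcases div_eq_zero_iff.1 h with h' | h'
      · exact h'
      · exact absurd h' hg2
    have hvec : ((r * -Real.sin θ₀, r * Real.cos θ₀) : ℝ × ℝ) =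
        (-(r * Real.sin θ₀)) • ((1 : ℝ), (0 : ℝ)) + (r * Real.cos θ₀) • ((0 : ℝ), (1 : ℝ)) := by
      simp [Prod.ext_iff]
    rw [hvec, map_add, map_smul, map_smul, map_add, map_smul, map_smul] at hnum
    simp only [smul_eq_mul] at hnum
    show (γ θ₀).2 * (g (γ θ₀) * fderiv ℝ f (γ θ₀) (1, 0) - f (γ θ₀) * fderiv ℝ g (γ θ₀) (1, 0)) -
      (γ θ₀).1 * (g (γ θ₀) * fderiv ℝ f (γ θ₀) (0, 1) - f (γ θ₀) * fderiv ℝ g (γ θ₀) (0, 1)) = 0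
    have hp1 : (γ θ₀).1 = r * Real.cos θ₀ := rfl
    have hp2 : (γ θ₀).2 = r * Real.sin θ₀ := rfl
    rw [hp1, hp2]
    linarith [hnum]

/-- main theorem: Let `f, g` be real analytic near `0 ∈ ℝ²`, with `g` having an
isolated zero at the origin, and let
`h = y(g f_x − f g_x) − x(g f_y − f g_y)` be the discriminant.  Suppose `σ₁, …, σ_l` are the
real-coefficient analytic Puiseux parametrizations through the origin arising from the
factorization `h(t^N, y) = ∏ (y − σ_j(t))`, so that near the origin the real zero set of `h`
(away from `0`) is exactly `⋃ᵢ {(t^N, σᵢ(t)) : t ≠ 0 small}`.  Then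
`lim_{(x,y)→(0,0)} f/g` exists iff each one-variable limit
`Lᵢ = lim_{t→0} f(t^N, σᵢ(t))/g(t^N, σᵢ(t))` exists and `L₁ = ⋯ = L_l`. -/
theorem stmt16 (f g : ℝ × ℝ → ℝ) (U : Set (ℝ × ℝ)) (hU : IsOpen U) (h0U : (0 : ℝ × ℝ) ∈ U)
    (hf : AnalyticOnNhd ℝ f U) (hg : AnalyticOnNhd ℝ g U)
    (hiso : ∀ p ∈ U, p ≠ 0 → g p ≠ 0)
    (N : ℕ) (hN : 0 < N) (l : ℕ) (σ : Fin l → ℝ → ℝ)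
    (hσa : ∀ i, AnalyticAt ℝ (σ i) 0) (hσ0 : ∀ i, σ i 0 = 0)
    (hX : ∃ ε > 0, ∀ p : ℝ × ℝ, p ≠ 0 → ‖p‖ < ε →
      ((p.2 * (g p * fderiv ℝ f p (1, 0) - f p * fderiv ℝ g p (1, 0)) -
        p.1 * (g p * fderiv ℝ f p (0, 1) - f p * fderiv ℝ g p (0, 1)) = 0) ↔
       ∃ i : Fin l, ∃ t : ℝ, t ≠ 0 ∧ p = (t ^ N, σ i t))) :
    (∃ L : ℝ, Tendsto (fun p : ℝ × ℝ => f p / g p)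
        (nhdsWithin 0 {p : ℝ × ℝ | p ≠ 0}) (nhds L)) ↔
    (∃ L : ℝ, ∀ i : Fin l, Tendsto (fun t : ℝ => f (t ^ N, σ i t) / g (t ^ N, σ i t))
        (nhdsWithin 0 {t : ℝ | t ≠ 0}) (nhds L)) := by
  constructor
  · rintro ⟨L, hT⟩
    refine ⟨L, fun i => ?_⟩
    have hmap : Tendsto (fun t : ℝ => ((t ^ N, σ i t) : ℝ × ℝ))
        (nhdsWithin 0 {t : ℝ | t ≠ 0}) (nhdsWithin 0 {p : ℝ × ℝ | p ≠ 0}) := by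
      apply tendsto_nhdsWithin_of_tendsto_nhds_of_eventually_within
      · have h1 : Tendsto (fun t : ℝ => t ^ N) (nhds 0) (nhds (0 : ℝ)) := by
          simpa [zero_pow hN.ne'] using (continuous_pow N).tendsto (0 : ℝ)
        have h2 : Tendsto (σ i) (nhds 0) (nhds (0 : ℝ)) := by
          simpa [hσ0 i] using (hσa i).continuousAt.tendsto
        have h3 : Tendsto (fun t : ℝ => ((t ^ N, σ i t) : ℝ × ℝ)) (nhds 0)
            (nhds ((0 : ℝ), (0 : ℝ))) := h1.prodMk_nhds h2
        have h4 : (((0 : ℝ), (0 : ℝ)) : ℝ × ℝ) = (0 : ℝ × ℝ) := rfl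
        rw [h4] at h3
        exact h3.mono_left nhdsWithin_le_nhds
      · filter_upwards [self_mem_nhdsWithin] with t ht
        have ht' : t ≠ 0 := ht
        show ((t ^ N, σ i t) : ℝ × ℝ) ≠ 0
        intro h
        have h0 : t ^ N = 0 := congrArg Prod.fst h
        exact ht' ((pow_eq_zero_iff hN.ne').1 h0)
    exact hT.comp hmap
  · rintro ⟨L, hL⟩
    refine ⟨L, ?_⟩
    rw [Metric.tendsto_nhdsWithin_nhds]
    intro ε hε
    have hev : ∀ᶠ t in nhdsWithin (0 : ℝ) {t : ℝ | t ≠ 0},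
        ∀ i, dist (f (t ^ N, σ i t) / g (t ^ N, σ i t)) L < ε := by
      rw [eventually_all]
      intro i
      exact (Metric.tendsto_nhds.1 (hL i)) ε hε
    obtain ⟨δ, hδ, hδp⟩ := Metric.mem_nhdsWithin_iff.1 hev
    obtain ⟨ρ, hρ, hρU⟩ := Metric.isOpen_iff.1 hU 0 h0U
    obtain ⟨ε₀, hε₀, hXe⟩ := hX
    set r₁ : ℝ := min ρ (min ε₀ (δ ^ N)) with hr₁def
    have hr₁ : 0 < r₁ := by positivity
    refine ⟨r₁ / 3, by positivity, ?_⟩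
    intro p hp hdist
    simp only [Set.mem_setOf_eq] at hp
    set r := rad p with hrdef
    have hr0 : 0 < r := by
      rcases lt_or_eq_of_le (rad_nonneg p) with h | h
      · exact h
      · exact absurd (rad_eq_zero h.symm) hp
    have hnp : dist p 0 = ‖p‖ := dist_zero_right p
    have hrlt : r < r₁ := by
      have h1 : r ≤ |p.1| + |p.2| := rad_le p
      have h2 : |p.1| ≤ ‖p‖ := norm_fst_le p
      have h3 : |p.2| ≤ ‖p‖ := norm_snd_le p
      have : ‖p‖ < r₁ / 3 := by rw [← hnp]; exact hdist
      linarith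
    have hcircnorm : ∀ q : ℝ × ℝ, rad q = r → ‖q‖ < r₁ := by
      intro q hq
      have h2 : |q.1| ≤ r := hq ▸ abs_fst_le_rad q
      have h3 : |q.2| ≤ r := hq ▸ abs_snd_le_rad q
      have : ‖q‖ ≤ r := max_le h2 h3
      linarith
    have hcircU : ∀ q : ℝ × ℝ, rad q = r → q ∈ U := by
      intro q hq
      apply hρU
      rw [Metric.mem_ball, dist_zero_right]
      exact lt_of_lt_of_le (hcircnorm q hq) (min_le_left _ _)
    have hcircne : ∀ q : ℝ × ℝ, rad q = r → q ≠ 0 := by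
      intro q hq h0
      rw [h0] at hq
      have : rad (0 : ℝ × ℝ) = 0 := by simp [rad]
      rw [this] at hq; exact hr0.ne' hq.symm
    -- extremal value bound: any point on the circle where the discriminant vanishes
    have hkey : ∀ q : ℝ × ℝ, rad q = r →
        q.2 * (g q * fderiv ℝ f q (1, 0) - f q * fderiv ℝ g q (1, 0)) -
        q.1 * (g q * fderiv ℝ f q (0, 1) - f q * fderiv ℝ g q (0, 1)) = 0 →
        dist (f q / g q) L < ε := by
      intro q hq hdisc
      have hne := hcircne q hq
      have hnlt : ‖q‖ < ε₀ :=
        lt_of_lt_of_le (hcircnorm q hq) (le_trans (min_le_right _ _) (min_le_left _ _))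
      obtain ⟨i, t, ht0, hqt⟩ := (hXe q hne hnlt).1 hdisc
      have htlt : |t| < δ := by
        by_contra hcon
        push_neg at hcon
        have h1 : δ ^ N ≤ |t| ^ N := pow_le_pow_left₀ hδ.le hcon N
        have h2 : |t| ^ N = |t ^ N| := (abs_pow t N).symm
        have h3 : |t ^ N| = |q.1| := by rw [hqt]
        have h4 : |q.1| ≤ r := hq ▸ abs_fst_le_rad q
        have h5 : r < δ ^ N := lt_of_lt_of_le hrlt
          (le_trans (min_le_right _ _) (min_le_right _ _))
        linarith
      have := hδp ⟨Metric.mem_ball.2 (by rwa [Real.dist_eq, sub_zero]), ht0⟩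
      have hval : f q / g q = f (t ^ N, σ i t) / g (t ^ N, σ i t) := by rw [hqt]
      rw [hval]
      exact this i
    obtain ⟨pM, hpMrad, hpMmax, hpMdisc⟩ :=
      circle_max f g U hf hg hiso r hr0 hcircU
    obtain ⟨pm, hpmrad, hpmmax, hpmdisc⟩ :=
      circle_max (-f) g U hf.neg hg hiso r hr0 hcircU
    have hpmdisc' : pm.2 * (g pm * fderiv ℝ f pm (1, 0) - f pm * fderiv ℝ g pm (1, 0)) -
        pm.1 * (g pm * fderiv ℝ f pm (0, 1) - f pm * fderiv ℝ g pm (0, 1)) = 0 := by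
      have h1 : fderiv ℝ (-f) pm = -fderiv ℝ f pm := fderiv_neg
      rw [h1] at hpmdisc
      simp only [ContinuousLinearMap.neg_apply, Pi.neg_apply] at hpmdisc
      linarith
    have hM := hkey pM hpMrad hpMdisc
    have hm := hkey pm hpmrad hpmdisc'
    have hub : f p / g p ≤ f pM / g pM := hpMmax p hrdef.symm
    have hlb : f pm / g pm ≤ f p / g p := by
      have := hpmmax p hrdef.symm
      simp only [Pi.neg_apply, neg_div] at this
      linarith
    rw [Real.dist_eq, abs_lt] at hM hm ⊢
    constructor <;> [linarith [hm.1]; linarith [hM.2]]
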